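/- arXiv:1804.03176 — 5 statements merged into one kernel-verified Lean document; each statement's English description precedes it below -/
import Mathlib

section
/- Let f : R^m → R be convex differentiable, X ⊆ R^m convex, M a d×m matrix, λ > 0, and define L(x,y) := f(x) + ⟨y, Mx⟩ + (λ/2)‖Mx‖². Then for any y ∈ R^d, the value Mx̂ is the same for every minimizer x̂ of L(·,y) over X. -/
open Set RealInnerProductSpace

set_option maxHeartbeats 1000000

/-- For the augmented Lagrangian `L(x,y) = f x + ⟪y, M x⟫ + (λ/2)‖M x‖²` with `f` convex
differentiable, `X` convex and `λ > 0`, the value `M x̂` is the same for every minimizer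
`x̂` of `L(·,y)` over `X`. -/
theorem Mxhat_unique {m d : ℕ}
    (f : EuclideanSpace ℝ (Fin m) → ℝ)
    (hf : ConvexOn ℝ univ f) (hfd : Differentiable ℝ f)
    (X : Set (EuclideanSpace ℝ (Fin m))) (hX : Convex ℝ X)
    (M : EuclideanSpace ℝ (Fin m) →L[ℝ] EuclideanSpace ℝ (Fin d))
    (lam : ℝ) (hlam : 0 < lam)
    (L : EuclideanSpace ℝ (Fin m) → EuclideanSpace ℝ (Fin d) → ℝ)
    (hL : ∀ x y, L x y = f x + ⟪y, M x⟫ + lam / 2 * ‖M x‖ ^ 2)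
    (y : EuclideanSpace ℝ (Fin d))
    (x₁ x₂ : EuclideanSpace ℝ (Fin m))
    (hx₁ : x₁ ∈ X) (hx₂ : x₂ ∈ X)
    (hmin₁ : IsMinOn (fun x => L x y) X x₁)
    (hmin₂ : IsMinOn (fun x => L x y) X x₂) :
    M x₁ = M x₂ := by
  set a := M x₁ with ha
  set b := M x₂ with hb
  set xm := (1/2 : ℝ) • x₁ + (1/2 : ℝ) • x₂ with hxm
  have hmem : xm ∈ X := hX hx₁ hx₂ (by norm_num) (by norm_num) (by norm_num)
  have h1 : L x₁ y ≤ L xm y := hmin₁ hmem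
  have h2 : L x₁ y ≤ L x₂ y := hmin₁ hx₂
  have h3 : L x₂ y ≤ L x₁ y := hmin₂ hx₁
  have hconv : f xm ≤ (1/2 : ℝ) * f x₁ + (1/2 : ℝ) * f x₂ :=
    hf.2 (mem_univ x₁) (mem_univ x₂) (by norm_num) (by norm_num) (by norm_num)
  have hM : M xm = (1/2 : ℝ) • (a + b) := by
    rw [hxm]; simp [smul_add]; rfl
  have hinner : ⟪y, M xm⟫ = (1/2 : ℝ) * (⟪y, a⟫ + ⟪y, b⟫) := by
    rw [hM, real_inner_smul_right, inner_add_right]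
  have hnorm : ‖M xm‖ ^ 2 = (1/4 : ℝ) * ‖a + b‖ ^ 2 := by
    rw [hM, norm_smul]
    simp
    ring
  have hpar : ‖a + b‖ ^ 2 + ‖a - b‖ ^ 2 = 2 * (‖a‖ * ‖a‖) + 2 * (‖b‖ * ‖b‖) := by
    have := parallelogram_law_with_norm ℝ a b
    nlinarith [this, sq_nonneg (‖a+b‖), sq_nonneg (‖a-b‖)]
  have hL1 := hL x₁ y
  have hL2 := hL x₂ y
  have hLm := hL xm y
  rw [hinner, hnorm] at hLm
  rw [hL1, hLm] at h1
  rw [hL1, hL2] at h2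
  rw [hL2, hL1] at h3
  have hsq : ‖a - b‖ ^ 2 ≤ 0 := by
    clear hmin₁ hmin₂ hL hf hfd hX hM hinner hnorm hL1 hL2 hLm
    nlinarith [h1, h2, h3, hconv, hpar, hlam, sq_nonneg (‖a-b‖)]
  have : a - b = 0 := by
    have h0 : ‖a - b‖ = 0 := by nlinarith [norm_nonneg (a - b), sq_nonneg (‖a-b‖)]
    exact norm_eq_zero.mp h0
  have := sub_eq_zero.mp this
  exact this
end

section
/- Let f : R^m → R be convex differentiable, X ⊆ R^m convex compact, M a d×m matrix, λ > 0, L(x,y) := f(x) + ⟨y, Mx⟩ + (λ/2)‖Mx‖², and for y ∈ R^d let x̂(y) ∈ argmin_{x∈X} L(x,y). Then for all y, y' ∈ R^d, ‖M x̂(y) − M x̂(y')‖ ≤ (1/λ)‖y − y'‖. -/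
open Set RealInnerProductSpace

/-- Gradient inequality for a convex differentiable function. -/
lemma myConvexGradIneq {E : Type*} [NormedAddCommGroup E] [NormedSpace ℝ E]
    {f : E → ℝ} (hf : ConvexOn ℝ univ f) {x v : E} {f' : E →L[ℝ] ℝ}
    (hd : HasFDerivAt f f' x) : f x + f' (v - x) ≤ f v := by
  set g : ℝ → ℝ := fun t => f (x + t • (v - x)) with hg
  have hgc : ConvexOn ℝ (univ : Set ℝ) g := by
    constructor
    · exact convex_univ
    · intro a _ b _ ta tb hta htb htab
      have : ta • (x + a • (v - x)) + tb • (x + b • (v - x))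
          = x + (ta * a + tb * b) • (v - x) := by
        have hxx : ta • x + tb • x = x := by
          rw [← add_smul, htab, one_smul]
        rw [smul_add, smul_add, smul_smul, smul_smul, add_smul,
          show ta • x + (ta * a) • (v - x) + (tb • x + (tb * b) • (v - x))
            = (ta • x + tb • x) + ((ta * a) • (v - x) + (tb * b) • (v - x)) by abel, hxx]
      calc g (ta * a + tb * b) = f (ta • (x + a • (v - x)) + tb • (x + b • (v - x))) := by
            rw [this]
        _ ≤ ta * f (x + a • (v - x)) + tb * f (x + b • (v - x)) :=
            hf.2 (mem_univ _) (mem_univ _) hta htb htab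
        _ = ta * g a + tb * g b := rfl
  have hline : HasDerivAt (fun t : ℝ => x + t • (v - x)) (v - x) 0 := by
    simpa using ((hasDerivAt_id (0:ℝ)).smul_const (v - x)).const_add x
  have hd' : HasFDerivAt f f' ((fun t : ℝ => x + t • (v - x)) 0) := by simpa using hd
  have hgd : HasDerivAt g (f' (v - x)) 0 := hd'.comp_hasDerivAt 0 hline
  have h01 : (0:ℝ) < 1 := one_pos
  have := hgc.le_slope_of_hasDerivAt (mem_univ (0:ℝ)) (mem_univ (1:ℝ)) h01 hgd
  rw [slope_def_field] at this
  have hg1 : g 1 = f v := by simp [hg]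
  have hg0 : g 0 = f x := by simp [hg]
  rw [hg0, hg1] at this
  linarith [this]

/-- Variational inequality at a constrained minimizer. -/
lemma myVI {E : Type*} [NormedAddCommGroup E] [NormedSpace ℝ E]
    {g : E → ℝ} {X : Set E} (hX : Convex ℝ X) {x x' : E} (hx : x ∈ X) (hx' : x' ∈ X)
    (hmin : IsMinOn g X x) {g' : E →L[ℝ] ℝ} (hd : HasFDerivAt g g' x) :
    0 ≤ g' (x' - x) :=
  hmin.localize.hasFDerivWithinAt_nonneg hd.hasFDerivWithinAt
    (sub_mem_posTangentConeAt_of_segment_subset (hX.segment_subset hx hx'))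

/-- The map `y ↦ M x̂(y)`, where `x̂(y)` minimizes the augmented Lagrangian `L(·,y)` over
the convex compact set `X`, is `(1/λ)`-Lipschitz. -/
theorem Mxhat_lipschitz {m d : ℕ}
    (f : EuclideanSpace ℝ (Fin m) → ℝ)
    (hf : ConvexOn ℝ univ f) (hfd : Differentiable ℝ f)
    (X : Set (EuclideanSpace ℝ (Fin m))) (hX : Convex ℝ X) (hXc : IsCompact X)
    (M : EuclideanSpace ℝ (Fin m) →L[ℝ] EuclideanSpace ℝ (Fin d))
    (lam : ℝ) (hlam : 0 < lam)
    (L : EuclideanSpace ℝ (Fin m) → EuclideanSpace ℝ (Fin d) → ℝ)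
    (hL : ∀ x y, L x y = f x + ⟪y, M x⟫ + lam / 2 * ‖M x‖ ^ 2)
    (xhat : EuclideanSpace ℝ (Fin d) → EuclideanSpace ℝ (Fin m))
    (hxhat : ∀ y, xhat y ∈ X ∧ IsMinOn (fun x => L x y) X (xhat y))
    (y y' : EuclideanSpace ℝ (Fin d)) :
    ‖M (xhat y) - M (xhat y')‖ ≤ (1 / lam) * ‖y - y'‖ := by
  obtain ⟨hx, hmin⟩ := hxhat y
  obtain ⟨hx', hmin'⟩ := hxhat y'
  -- derivative of L(·, y0) at x0
  have hLd : ∀ (y0 : EuclideanSpace ℝ (Fin d)) (x0 : EuclideanSpace ℝ (Fin m)),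
      HasFDerivAt (fun x => L x y0)
        (fderiv ℝ f x0 + ((innerSL ℝ y0).comp M + lam • ((innerSL ℝ (M x0)).comp M))) x0 := by
    intro y0 x0
    have hfun : (fun x => L x y0) = fun x => f x + (⟪y0, M x⟫ + lam / 2 * ⟪M x, M x⟫) := by
      funext x; rw [hL, real_inner_self_eq_norm_sq]; ring
    rw [hfun]
    have h1 : HasFDerivAt f (fderiv ℝ f x0) x0 := (hfd x0).hasFDerivAt
    have h2 : HasFDerivAt (fun x => ⟪y0, M x⟫) ((innerSL ℝ y0).comp M) x0 :=
      ((innerSL ℝ y0).comp M).hasFDerivAt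
    have hM : HasFDerivAt (fun x => M x) M x0 := M.hasFDerivAt
    have h3 := (hM.inner (𝕜 := ℝ) hM).const_mul (lam / 2)
    have hclm : (lam / 2) • ((fderivInnerCLM ℝ (M x0, M x0)).comp (M.prod M))
        = lam • ((innerSL ℝ (M x0)).comp M) := by
      ext w
      simp only [ContinuousLinearMap.smul_apply, ContinuousLinearMap.coe_comp',
        Function.comp_apply, fderivInnerCLM_apply, innerSL_apply_apply,
        ContinuousLinearMap.prod_apply, smul_eq_mul]
      rw [real_inner_comm (M w) (M x0)]
      ring
    rw [hclm] at h3
    exact h1.add (h2.add h3)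
  set x := xhat y
  set x' := xhat y'
  have hvix := myVI hX hx hx' hmin (hLd y x)
  have hvix' := myVI hX hx' hx hmin' (hLd y' x')
  simp only [ContinuousLinearMap.add_apply, ContinuousLinearMap.smul_apply,
    ContinuousLinearMap.coe_comp', Function.comp_apply, innerSL_apply_apply, smul_eq_mul,
    map_sub] at hvix hvix'
  have hg1 : f x + (fderiv ℝ f x) (x' - x) ≤ f x' :=
    myConvexGradIneq hf (hfd x).hasFDerivAt
  have hg2 : f x' + (fderiv ℝ f x') (x - x') ≤ f x :=
    myConvexGradIneq hf (hfd x').hasFDerivAt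
  set u := M x with hu
  set v := M x' with hv
  have hkey : lam * ‖u - v‖ ^ 2 ≤ ⟪y - y', v - u⟫ := by
    have hnorm : ‖u - v‖ ^ 2 = ⟪u, u⟫ - 2 * ⟪u, v⟫ + ⟪v, v⟫ := by
      rw [← real_inner_self_eq_norm_sq]
      simp only [inner_sub_left, inner_sub_right]
      rw [real_inner_comm v u]; ring
    have hyy : ⟪y - y', v - u⟫ = ⟪y, v⟫ - ⟪y, u⟫ - ⟪y', v⟫ + ⟪y', u⟫ := by
      simp only [inner_sub_left, inner_sub_right]; ring
    rw [hnorm, hyy]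
    simp only [map_sub] at hg1 hg2
    rw [real_inner_comm u v] at hvix'
    linarith
  have hcs : ⟪y - y', v - u⟫ ≤ ‖y - y'‖ * ‖u - v‖ := by
    rw [show ‖u - v‖ = ‖v - u‖ from norm_sub_rev u v]
    exact real_inner_le_norm _ _
  rcases eq_or_lt_of_le (norm_nonneg (u - v)) with h0 | h0
  · rw [← h0]; positivity
  · have hlin : lam * ‖u - v‖ ≤ ‖y - y'‖ := by nlinarith
    calc ‖u - v‖ = (1 / lam) * (lam * ‖u - v‖) := by field_simp
      _ ≤ (1 / lam) * ‖y - y'‖ := by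
          apply mul_le_mul_of_nonneg_left hlin; positivity
end

section
/- Let (Δ_t) be a sequence of nonnegative reals satisfying Δ_{t+1} − Δ_t ≤ −(2/(t+2)) min{Δ_{t+1}, δ} + (2/(t+2))² C/2 for all t, with δ, C > 0. If there exists t_0 > C/δ − 2 with Δ_{t_0} ≤ δ, then for all t ≥ t_0, Δ_t ≤ min{4δ(t_0+2)/(t+2), δ}. -/
/-- Sublinear decrease lemma: with step `η_t = 2/(t+2)`, once `Δ_{t₀} ≤ δ` for some
`t₀ > C/δ − 2`, we have `Δ_t ≤ min{4δ(t₀+2)/(t+2), δ}` for all `t ≥ t₀`. -/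
theorem sublinear_decrease
    (Δ : ℕ → ℝ) (hnn : ∀ t, 0 ≤ Δ t)
    (δ C : ℝ) (hδ : 0 < δ) (hC : 0 < C)
    (hrec : ∀ t : ℕ, Δ (t + 1) - Δ t ≤
      -(2 / ((t : ℝ) + 2)) * min (Δ (t + 1)) δ + (2 / ((t : ℝ) + 2)) ^ 2 * C / 2)
    (t₀ : ℕ) (ht₀ : (t₀ : ℝ) > C / δ - 2) (hΔt₀ : Δ t₀ ≤ δ) :
    ∀ t ≥ t₀, Δ t ≤ min (4 * δ * ((t₀ : ℝ) + 2) / ((t : ℝ) + 2)) δ := by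
  have hC' : C < δ * ((t₀ : ℝ) + 2) := by
    have := (div_lt_iff₀ hδ).mp (show C / δ < (t₀ : ℝ) + 2 by linarith)
    linarith [this]
  have key : ∀ t, t₀ ≤ t → Δ t ≤ δ ∧ Δ t ≤ 4 * δ * ((t₀ : ℝ) + 2) / ((t : ℝ) + 2) := by
    intro t ht
    induction t, ht using Nat.le_induction with
    | base =>
      refine ⟨hΔt₀, ?_⟩
      rw [le_div_iff₀ (by positivity)]
      nlinarith [Nat.cast_nonneg (α := ℝ) t₀]
    | succ t ht ih =>
      have hs : (0:ℝ) < (t : ℝ) + 2 := by positivity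
      set s : ℝ := (t : ℝ) + 2 with hsdef
      clear_value s
      have hts : (t₀ : ℝ) + 2 ≤ s := by
        have : (t₀ : ℝ) ≤ (t : ℝ) := by exact_mod_cast ht
        simp [hsdef]; linarith
      have hrec' := hrec t
      rw [← hsdef] at hrec'
      have h1 : Δ (t + 1) ≤ δ := by
        by_cases h : Δ (t + 1) ≤ δ
        · exact h
        · push_neg at h
          rw [min_eq_right h.le] at hrec'
          have h2 : s * s * (Δ (t+1) - Δ t) ≤ s * s * (-(2 / s) * δ + (2 / s) ^ 2 * C / 2) :=
            mul_le_mul_of_nonneg_left hrec' (by positivity)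
          have h3 : s * s * (-(2 / s) * δ + (2 / s) ^ 2 * C / 2) = -(2 * s * δ) + 2 * C := by
            field_simp
          rw [h3] at h2
          have e1 : s * s * Δ t ≤ s * s * δ :=
            mul_le_mul_of_nonneg_left ih.1 (mul_nonneg hs.le hs.le)
          have e2 : δ * ((t₀ : ℝ) + 2) ≤ δ * s :=
            mul_le_mul_of_nonneg_left hts hδ.le
          have e3 : s * s * Δ (t+1) ≤ s * s * δ := by nlinarith [h2, e1, e2, hC', hδ, hs]
          exact le_of_mul_le_mul_left e3 (mul_pos hs hs)
      refine ⟨h1, ?_⟩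
      rw [min_eq_left h1] at hrec'
      have h2 : s * s * (Δ (t+1) - Δ t) ≤ s * s * (-(2 / s) * Δ (t+1) + (2 / s) ^ 2 * C / 2) :=
        mul_le_mul_of_nonneg_left hrec' (by positivity)
      have h3 : s * s * (-(2 / s) * Δ (t+1) + (2 / s) ^ 2 * C / 2)
          = -(2 * s * Δ (t+1)) + 2 * C := by
        field_simp
      rw [h3] at h2
      have hih : Δ t * s ≤ 4 * δ * ((t₀ : ℝ) + 2) := (le_div_iff₀ hs).mp ih.2
      have hih' : s * (Δ t * s) ≤ s * (4 * δ * ((t₀ : ℝ) + 2)) :=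
        mul_le_mul_of_nonneg_left hih hs.le
      have hcast : ((t + 1 : ℕ) : ℝ) + 2 = s + 1 := by push_cast [hsdef]; ring
      rw [hcast, le_div_iff₀ (by linarith)]
      have hB0 : 0 < 4 * δ * ((t₀ : ℝ) + 2) := by positivity
      have hΔ1 : (s * s + 2 * s) * Δ (t+1) ≤ s * (4 * δ * ((t₀ : ℝ) + 2)) + 2 * C := by
        linarith [h2, hih']
      have hC2 : 2 * C ≤ (4 * δ * ((t₀ : ℝ) + 2)) / 2 := by linarith [hC']
      have hs2 : (2:ℝ) ≤ s := by
        have : (0:ℝ) ≤ (t₀ : ℝ) := Nat.cast_nonneg t₀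
        linarith
      have hΔ2 : (s * s + 2 * s) * Δ (t+1)
          ≤ s * (4 * δ * ((t₀ : ℝ) + 2)) + (4 * δ * ((t₀ : ℝ) + 2)) / 2 :=
        hΔ1.trans (by linarith)
      have hpos : (0:ℝ) < s * s + 2 * s := by
        have := mul_pos hs hs
        linarith
      have a1 : (s * s + 2 * s) * Δ (t+1) * (s + 1)
          ≤ (s * (4 * δ * ((t₀ : ℝ) + 2)) + (4 * δ * ((t₀ : ℝ) + 2)) / 2) * (s + 1) :=
        mul_le_mul_of_nonneg_right hΔ2 (by linarith)
      have a2 : 0 ≤ (4 * δ * ((t₀ : ℝ) + 2)) * (s - 1) :=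
        mul_nonneg hB0.le (by linarith)
      have step1 : Δ (t+1) * (s + 1) * (s * s + 2 * s)
          ≤ (4 * δ * ((t₀ : ℝ) + 2)) * (s * s + 2 * s) := by
        calc Δ (t+1) * (s + 1) * (s * s + 2 * s)
            = (s * s + 2 * s) * Δ (t+1) * (s + 1) := by ring
          _ ≤ (s * (4 * δ * ((t₀ : ℝ) + 2)) + (4 * δ * ((t₀ : ℝ) + 2)) / 2) * (s + 1) := a1
          _ ≤ (4 * δ * ((t₀ : ℝ) + 2)) * (s * s + 2 * s) := by linarith [a2]
      exact le_of_mul_le_mul_right step1 hpos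
  intro t ht
  exact le_min (key t ht).2 (key t ht).1
end

section
/- Let (Δ_t) be nonnegative reals with Δ_{t+1} − Δ_t ≤ −η_t δ + η_t² C/2 whenever Δ_t, Δ_{t+1} ≥ δ, where η_t = 2/(t+2) and δ, C > 0, and the full recurrence Δ_{t+1} − Δ_t ≤ −η_t min{Δ_{t+1},δ} + η_t² C/2 holds for all t. Then there exists a finite t_0 with Δ_{t_0} ≤ δ; i.e., it is impossible that Δ_t ≥ δ for all t. -/
/-- With the decreasing step size `η_t = 2/(t+2)` it is impossible that `Δ_t ≥ δ`
for all `t`: there is a finite time `t₀` with `Δ_{t₀} ≤ δ`. -/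
theorem exists_time_below_delta
    (Δ : ℕ → ℝ) (hnn : ∀ t, 0 ≤ Δ t)
    (δ C : ℝ) (hδ : 0 < δ) (hC : 0 < C)
    (hrec : ∀ t : ℕ, Δ (t + 1) - Δ t ≤
      -(2 / ((t : ℝ) + 2)) * min (Δ (t + 1)) δ + (2 / ((t : ℝ) + 2)) ^ 2 * C / 2)
    (hrec' : ∀ t : ℕ, δ ≤ Δ t → δ ≤ Δ (t + 1) →
      Δ (t + 1) - Δ t ≤ -(2 / ((t : ℝ) + 2)) * δ + (2 / ((t : ℝ) + 2)) ^ 2 * C / 2) :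
    ∃ t₀ : ℕ, Δ t₀ ≤ δ := by
  by_contra h
  push_neg at h
  -- key inequality by induction
  have key : ∀ n : ℕ, Δ n ≤ Δ 0 - δ * (∑ t ∈ Finset.range n, 2 / ((t : ℝ) + 2))
      + (∑ t ∈ Finset.range n, (2 / ((t : ℝ) + 2)) ^ 2 * C / 2) := by
    intro n
    induction n with
    | zero => simp
    | succ n ih =>
      have hstep := hrec' n (le_of_lt (h n)) (le_of_lt (h (n + 1)))
      rw [Finset.sum_range_succ, Finset.sum_range_succ]
      nlinarith [hstep, ih]
  -- bound the sum of squares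
  have hsq : ∀ n : ℕ, (∑ t ∈ Finset.range n, (2 / ((t : ℝ) + 2)) ^ 2 * C / 2) ≤ 2 * C := by
    intro n
    have hle : ∀ t ∈ Finset.range n, (2 / ((t : ℝ) + 2)) ^ 2 * C / 2 ≤
        (2 * C / ((t : ℝ) + 1) - 2 * C / ((t : ℝ) + 2)) := by
      intro t _
      have h1 : (0:ℝ) < (t : ℝ) + 1 := by positivity
      have h2 : (0:ℝ) < (t : ℝ) + 2 := by positivity
      rw [div_sub_div _ _ (ne_of_gt h1) (ne_of_gt h2), div_pow, div_mul_eq_mul_div,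
        div_div, div_le_div_iff₀ (by positivity) (by positivity)]
      nlinarith
    calc (∑ t ∈ Finset.range n, (2 / ((t : ℝ) + 2)) ^ 2 * C / 2)
        ≤ ∑ t ∈ Finset.range n, (2 * C / ((t : ℝ) + 1) - 2 * C / ((t : ℝ) + 2)) :=
          Finset.sum_le_sum hle
      _ = ∑ t ∈ Finset.range n, (2 * C / ((t : ℝ) + 1) - 2 * C / (((t + 1 : ℕ) : ℝ) + 1)) := by
          apply Finset.sum_congr rfl; intro t _; push_cast; ring
      _ = 2 * C / (((0:ℕ) : ℝ) + 1) - 2 * C / ((n : ℝ) + 1) := by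
          rw [Finset.sum_range_sub' (fun t : ℕ => 2 * C / ((t : ℝ) + 1))]
      _ ≤ 2 * C := by
          have : (0:ℝ) ≤ 2 * C / ((n : ℝ) + 1) := by positivity
          push_cast; nlinarith
  -- the harmonic-like sum diverges
  have hS : Filter.Tendsto (fun n => ∑ t ∈ Finset.range n, 2 / ((t : ℝ) + 2))
      Filter.atTop Filter.atTop := by
    have hH := Real.tendsto_sum_range_one_div_nat_succ_atTop
    refine Filter.tendsto_atTop_mono ?_ hH
    intro n
    apply Finset.sum_le_sum
    intro t _
    have h1 : (0:ℝ) < (t : ℝ) + 1 := by positivity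
    have h2 : (0:ℝ) < (t : ℝ) + 2 := by positivity
    rw [div_le_div_iff₀ h1 h2]
    push_cast; nlinarith
  -- get n with δ * S n > Δ 0 + 2C
  have hS' : Filter.Tendsto (fun n => δ * ∑ t ∈ Finset.range n, 2 / ((t : ℝ) + 2))
      Filter.atTop Filter.atTop := Filter.Tendsto.const_mul_atTop hδ hS
  obtain ⟨n, hn⟩ := (Filter.tendsto_atTop.mp hS' (Δ 0 + 2 * C + 1)).exists
  have := key n
  have := hsq n
  have := hnn n
  linarith
end

section
/- Let d : R^d → R be concave with maximum d* attained on Y*, and suppose the error bound d* − d(y) ≥ (1/(2δ)) min{α² dist(y,Y*)², α δ dist(y,Y*)} holds for all y, with α, δ > 0. If additionally d is differentiable, then for all y: ‖∇d(y)‖ ≥ (1/(2δ)) min{α² dist(y,Y*), α δ}, and also ‖∇d(y)‖ ≥ (α/√(2δ)) min{√(d* − d(y)), √(δ/2)}. -/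
open Set Metric

private lemma concave_grad_bound {n : ℕ} (d : EuclideanSpace ℝ (Fin n) → ℝ)
    (hconc : ConcaveOn ℝ univ d) (hd : Differentiable ℝ d)
    (y z : EuclideanSpace ℝ (Fin n)) : d z - d y ≤ ‖gradient d y‖ * dist y z := by
  set g : EuclideanSpace ℝ (Fin n) := gradient d y with hg
  have hline : HasDerivAt (fun t : ℝ => y + t • (z - y)) (z - y) 0 := by
    simpa using ((hasDerivAt_id (0:ℝ)).smul_const (z - y)).const_add y
  have hgrad : HasFDerivAt d (InnerProductSpace.toDual ℝ _ g) y := (hd y).hasGradientAt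
  have hcomp : HasDerivAt (fun t : ℝ => d (y + t • (z - y)))
      (inner ℝ g (z - y) : ℝ) 0 := by
    have h0 : y + (0:ℝ) • (z - y) = y := by simp
    have := (h0 ▸ hgrad).comp_hasDerivAt (0:ℝ) hline
    simp [InnerProductSpace.toDual_apply_apply] at this; exact this
  have hcc : ConcaveOn ℝ univ (fun t : ℝ => d (y + t • (z - y))) := by
    have := hconc.comp_affineMap (AffineMap.lineMap y z)
    simp only [preimage_univ] at this
    have heq : (fun t : ℝ => d (y + t • (z - y))) = d ∘ AffineMap.lineMap y z := by
      funext t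
      rw [Function.comp_apply, AffineMap.lineMap_apply, vsub_eq_sub, vadd_eq_add, add_comm]
    rw [heq]; exact this
  have hslope := hcc.slope_le_of_hasDerivAt (mem_univ (0:ℝ)) (mem_univ 1) one_pos hcomp
  have hsl : slope (fun t : ℝ => d (y + t • (z - y))) 0 1 = d z - d y := by
    simp [slope]
  rw [hsl] at hslope
  calc d z - d y ≤ (inner ℝ g (z - y) : ℝ) := hslope
    _ ≤ ‖g‖ * ‖z - y‖ := real_inner_le_norm g (z - y)
    _ = ‖g‖ * dist y z := by rw [dist_eq_norm, norm_sub_rev]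


/-- Gradient lower bounds from the error bound on the augmented dual function:
`‖∇d(y)‖ ≥ (1/(2δ)) min{α² dist(y,Y*), αδ}` and
`‖∇d(y)‖ ≥ (α/√(2δ)) min{√(d* − d(y)), √(δ/2)}`. -/
theorem gradient_lower_bounds {n : ℕ}
    (d : EuclideanSpace ℝ (Fin n) → ℝ)
    (hconc : ConcaveOn ℝ univ d) (hd : Differentiable ℝ d)
    (Ystar : Set (EuclideanSpace ℝ (Fin n))) (hne : Ystar.Nonempty)
    (dstar : ℝ) (hub : ∀ y, d y ≤ dstar) (hatt : ∀ y ∈ Ystar, d y = dstar)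
    (α δ : ℝ) (hα : 0 < α) (hδ : 0 < δ)
    (herr : ∀ y, dstar - d y ≥
      (1 / (2 * δ)) * min (α ^ 2 * infDist y Ystar ^ 2) (α * δ * infDist y Ystar)) :
    ∀ y,
      ‖gradient d y‖ ≥ (1 / (2 * δ)) * min (α ^ 2 * infDist y Ystar) (α * δ) ∧
      ‖gradient d y‖ ≥
        (α / Real.sqrt (2 * δ)) * min (Real.sqrt (dstar - d y)) (Real.sqrt (δ / 2)) := by

  intro y
  set r : ℝ := infDist y Ystar with hr
  set G : ℝ := ‖gradient d y‖ with hG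
  have hr0 : 0 ≤ r := infDist_nonneg
  have hG0 : 0 ≤ G := norm_nonneg _
  have he0 : 0 ≤ dstar - d y := sub_nonneg.2 (hub y)
  -- key: dstar - d y ≤ G * r
  have key : dstar - d y ≤ G * r := by
    by_contra hcon
    push_neg at hcon
    rcases eq_or_lt_of_le hG0 with hG0' | hGpos
    · obtain ⟨z, hz⟩ := hne
      have := concave_grad_bound d hconc hd y z
      rw [hatt z hz, ← hG] at this
      nlinarith [dist_nonneg (x := y) (y := z)]
    · have h1 : r < (dstar - d y) / G := by
        rw [lt_div_iff₀ hGpos]; linarith [hcon]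
      obtain ⟨z, hz, hdz⟩ := (infDist_lt_iff hne).1 h1
      have h2 := concave_grad_bound d hconc hd y z
      rw [hatt z hz, ← hG] at h2
      rw [lt_div_iff₀ hGpos] at hdz
      nlinarith
  have herr' := herr y
  rw [← hr] at herr'
  constructor
  · -- first bound
    rcases eq_or_lt_of_le hr0 with hr0' | hrpos
    · have hz : min (α ^ 2 * r) (α * δ) = 0 := by
        rw [← hr0', mul_zero]; exact min_eq_left (by positivity)
      rw [ge_iff_le, hz, mul_zero]; exact hG0
    · rw [ge_iff_le]
      have hmin : min (α ^ 2 * r ^ 2) (α * δ * r) = min (α ^ 2 * r) (α * δ) * r := by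
        rw [min_mul_of_nonneg _ _ hr0]; ring_nf
      rw [hmin] at herr'
      have : (1 / (2 * δ)) * (min (α ^ 2 * r) (α * δ) * r) ≤ G * r := le_trans herr' key
      have h2δ : (0:ℝ) < 2 * δ := by linarith
      rw [div_mul_eq_mul_div, one_mul] at this ⊢
      rw [div_le_iff₀ h2δ] at this ⊢
      nlinarith
  · -- second bound
    set e : ℝ := dstar - d y with he
    rw [ge_iff_le]
    have h2δ : (0:ℝ) < 2 * δ := by linarith
    have hs2δ : 0 < Real.sqrt (2 * δ) := Real.sqrt_pos.2 h2δ
    by_cases hc : α * r ≤ δ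
    · -- min is quadratic branch
      have hminq : α ^ 2 * r ^ 2 ≤ α * δ * r := by
        nlinarith [mul_nonneg (mul_nonneg hα.le hr0) (sub_nonneg.2 hc)]
      have hE : α ^ 2 * r ^ 2 / (2 * δ) ≤ e := by
        have := herr'
        rw [min_eq_left hminq] at this
        rw [ge_iff_le, one_div, inv_mul_eq_div] at this
        linarith
      rcases eq_or_lt_of_le he0 with he0' | hepos
      · have hz0 : min (Real.sqrt e) (Real.sqrt (δ / 2)) = 0 := by
          rw [← he0', Real.sqrt_zero]; exact min_eq_left (Real.sqrt_nonneg _)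
        rw [hz0, mul_zero]; exact hG0
      · -- e > 0
        have hrle : r ≤ Real.sqrt (2 * δ * e) / α := by
          rw [le_div_iff₀ hα]
          rw [← Real.sqrt_sq (by positivity : 0 ≤ r * α)]
          apply Real.sqrt_le_sqrt
          rw [div_le_iff₀ h2δ] at hE
          nlinarith
        have hGe : α * Real.sqrt e / Real.sqrt (2 * δ) ≤ G := by
          have h1 : e ≤ G * (Real.sqrt (2 * δ * e) / α) :=
            key.trans (mul_le_mul_of_nonneg_left hrle hG0)
          have hsqe : 0 < Real.sqrt e := Real.sqrt_pos.2 hepos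
          have hsplit : Real.sqrt (2 * δ * e) = Real.sqrt (2 * δ) * Real.sqrt e :=
            Real.sqrt_mul (le_of_lt h2δ) e
          rw [hsplit] at h1
          rw [div_le_iff₀ hs2δ]
          have hee : e = Real.sqrt e * Real.sqrt e := (Real.mul_self_sqrt he0).symm
          have hrw : G * (Real.sqrt (2 * δ) * Real.sqrt e / α)
              = G * (Real.sqrt (2 * δ) * Real.sqrt e) / α := by ring
          rw [hrw, le_div_iff₀ hα] at h1
          nlinarith [h1, hsqe, hee, mul_pos hsqe hsqe]
        refine le_trans ?_ hGe
        have hrw2 : α * Real.sqrt e / Real.sqrt (2 * δ)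
            = α / Real.sqrt (2 * δ) * Real.sqrt e := by ring
        rw [hrw2]
        exact mul_le_mul_of_nonneg_left (min_le_left _ _) (by positivity)
    · -- min is linear branch
      push_neg at hc
      have hrpos : 0 < r := by nlinarith
      have hminl : α * δ * r ≤ α ^ 2 * r ^ 2 := by nlinarith
      have hE : α * r / 2 ≤ e := by
        have := herr'
        rw [min_eq_right hminl] at this
        rw [ge_iff_le, one_div, inv_mul_eq_div] at this
        have h3 : α * δ * r / (2 * δ) = α * r / 2 := by field_simp
        rw [h3] at this
        exact this
      have hGhalf : α / 2 ≤ G := by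
        have : α * r / 2 ≤ G * r := hE.trans key
        rw [div_le_iff₀ (by norm_num : (0:ℝ) < 2)]
        nlinarith
      refine le_trans ?_ hGhalf
      have hhalf : Real.sqrt (δ / 2) / Real.sqrt (2 * δ) = 1 / 2 := by
        rw [← Real.sqrt_div (by positivity)]
        rw [show δ / 2 / (2 * δ) = 1 / 4 by field_simp; ring]
        rw [show (1:ℝ)/4 = (1/2)^2 by norm_num, Real.sqrt_sq (by norm_num)]
      have hmin2 : min (Real.sqrt e) (Real.sqrt (δ / 2)) ≤ Real.sqrt (δ / 2) :=
        min_le_right _ _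
      calc α / Real.sqrt (2 * δ) * min (Real.sqrt e) (Real.sqrt (δ / 2))
          ≤ α / Real.sqrt (2 * δ) * Real.sqrt (δ / 2) := by
            apply mul_le_mul_of_nonneg_left hmin2; positivity
        _ = α * (Real.sqrt (δ / 2) / Real.sqrt (2 * δ)) := by ring
        _ = α / 2 := by rw [hhalf]; ring
end
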